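/- For every bounded subset D of the cone K, the image G(D) is bounded in C([0,T],ℝ); in fact, for every u ∈ D one has ‖Gu‖ ≤ (2/(1−β)) · φ_q( λ·M_D / (T·m_D)^k ) · ∫₀^T φ_q( s + βη/(1−β) ) ds, where M_D = sup { f(u(t)) : u ∈ D, t ∈ [0,T] } and m_D = inf { f(u(t)) : u ∈ D, t ∈ [0,T] }. -/

import Mathlib

open Set MeasureTheory

/-- The p-Laplacian map `φ_p(s) = |s|^(p-2) s` (with `φ_p 0 = 0`). -/
noncomputable def phi (p s : ℝ) : ℝ := |s| ^ (p - 2) * s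

/-- `h_u(r) = f(u(r)) / (∫₀ᵀ f(u(τ)) dτ)^k`. -/
noncomputable def hfun (T k : ℝ) (f u : ℝ → ℝ) (r : ℝ) : ℝ :=
  f (u r) / (∫ τ in (0:ℝ)..T, f (u τ)) ^ k

/-- `A_u = −(λβ/(1−β)) ∫₀^η h_u(r) dr`. -/
noncomputable def Afun (T η β lam k : ℝ) (f u : ℝ → ℝ) : ℝ :=
  -(lam * β / (1 - β)) * ∫ r in (0:ℝ)..η, hfun T k f u r

/-- `g_u(s) = λ ∫₀^s h_u(r) dr − A_u`. -/
noncomputable def gfun (T η β lam k : ℝ) (f u : ℝ → ℝ) (s : ℝ) : ℝ :=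
  lam * (∫ r in (0:ℝ)..s, hfun T k f u r) - Afun T η β lam k f u

/-- `B_u = (1/(1−β)) ( ∫₀^T φ_q(g_u(s)) ds − β ∫₀^η φ_q(g_u(s)) ds )`. -/
noncomputable def Bfun (T η β lam k q : ℝ) (f u : ℝ → ℝ) : ℝ :=
  (1 / (1 - β)) * ((∫ s in (0:ℝ)..T, phi q (gfun T η β lam k f u s))
    - β * ∫ s in (0:ℝ)..η, phi q (gfun T η β lam k f u s))

/-- `u` (with derivative `u'`) is a solution of the boundary value problem:
`u` is continuously differentiable on `[0,T]`, `φ_p ∘ u'` is differentiable on `(0,T)` with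
`−(φ_p(u'(t)))' = λ h_u(t)` there, `φ_p(u'(0)) − β φ_p(u'(η)) = 0` and `u(T) − β u(η) = 0`. -/
def IsSolution (T η β lam k p : ℝ) (f u u' : ℝ → ℝ) : Prop :=
  (∀ t ∈ Set.Icc (0:ℝ) T, HasDerivWithinAt u (u' t) (Set.Icc (0:ℝ) T) t) ∧
  ContinuousOn u' (Set.Icc (0:ℝ) T) ∧
  (∀ t ∈ Set.Ioo (0:ℝ) T, HasDerivAt (fun s => phi p (u' s)) (-(lam * hfun T k f u t)) t) ∧
  phi p (u' 0) - β * phi p (u' η) = 0 ∧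
  u T - β * u η = 0

/-- The operator `G` of the integral equation: `(Gu)(t) = −∫₀ᵗ φ_q(g_u(s)) ds + B_u`. -/
noncomputable def Gop (T η β lam k q : ℝ) (f u : ℝ → ℝ) (t : ℝ) : ℝ :=
  -(∫ s in (0:ℝ)..t, phi q (gfun T η β lam k f u s)) + Bfun T η β lam k q f u

/-- The sup norm of `u` over `[0,T]`. -/
noncomputable def supNorm (T : ℝ) (u : ℝ → ℝ) : ℝ := ⨆ t : Set.Icc (0:ℝ) T, |u t|

/-- Membership in the cone `K`: `u` is continuous and concave on `[0,T]` and
`min_{[0,T]} u ≥ ρ ‖u‖`. -/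
def InCone (T ρ : ℝ) (u : ℝ → ℝ) : Prop :=
  ContinuousOn u (Set.Icc (0:ℝ) T) ∧ ConcaveOn ℝ (Set.Icc (0:ℝ) T) u ∧
    ∀ t ∈ Set.Icc (0:ℝ) T, ρ * supNorm T u ≤ u t

private lemma phi_nonneg' {q s : ℝ} (hs : 0 ≤ s) : 0 ≤ phi q s :=
  mul_nonneg (Real.rpow_nonneg (abs_nonneg _) _) hs

private lemma phi_eq_rpow {q s : ℝ} (hq : 1 < q) (hs : 0 ≤ s) :
    phi q s = s ^ (q - 1) := by
  rcases eq_or_lt_of_le hs with h | h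
  · simp [phi, ← h, Real.zero_rpow (by linarith : q - 1 ≠ 0)]
  · rw [phi, abs_of_pos h]
    rw [show q - 1 = (q - 2) + 1 by ring, Real.rpow_add_one h.ne']

private lemma phi_mono' {q a b : ℝ} (hq : 1 < q) (ha : 0 ≤ a) (hab : a ≤ b) :
    phi q a ≤ phi q b := by
  rw [phi_eq_rpow hq ha, phi_eq_rpow hq (ha.trans hab)]
  exact Real.rpow_le_rpow ha hab (by linarith)

private lemma phi_mul' (q x y : ℝ) : phi q (x * y) = phi q x * phi q y := by
  unfold phi
  rw [abs_mul, Real.mul_rpow (abs_nonneg x) (abs_nonneg y)]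
  ring

/-- `G` maps bounded subsets `D` of the cone to bounded sets; explicitly, for `u ∈ D`,
`‖Gu‖ ≤ (2/(1−β)) φ_q(λ M_D/(T m_D)^k) ∫₀ᵀ φ_q(s + βη/(1−β)) ds`, where `M_D` and `m_D`
are the sup and inf of `f(u(t))` over `u ∈ D`, `t ∈ [0,T]`. -/
theorem G_bounded_on_bounded_sets
    (T η β lam k p q : ℝ) (f : ℝ → ℝ)
    (hT : 0 < T) (hη : 0 < η) (hηT : η < T) (hβ0 : 0 < β) (hβ1 : β < 1)
    (hlam : 0 < lam) (hk : 0 < k) (hp : 1 < p) (hpq : 1 / p + 1 / q = 1)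
    (hf : Continuous f) (hfpos : ∀ x, 0 < f x)
    (D : Set (ℝ → ℝ)) (hD : ∀ u ∈ D, InCone T (β * (T - η) / (T - β * η)) u)
    (hDbdd : ∃ M : ℝ, ∀ u ∈ D, ∀ t ∈ Set.Icc (0:ℝ) T, |u t| ≤ M) :
    ∀ u ∈ D,
      supNorm T (Gop T η β lam k q f u) ≤
        2 / (1 - β) *
          phi q (lam * sSup {y : ℝ | ∃ u ∈ D, ∃ t ∈ Set.Icc (0:ℝ) T, y = f (u t)} /
            (T * sInf {y : ℝ | ∃ u ∈ D, ∃ t ∈ Set.Icc (0:ℝ) T, y = f (u t)}) ^ k) *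
          ∫ s in (0:ℝ)..T, phi q (s + β * η / (1 - β)) := by
  obtain ⟨M0, hM0⟩ := hDbdd
  intro u hu
  have h1β : 0 < 1 - β := by linarith
  have h0T : (0:ℝ) ∈ Set.Icc (0:ℝ) T := ⟨le_rfl, hT.le⟩
  have hηIcc : η ∈ Set.Icc (0:ℝ) T := ⟨hη.le, hηT.le⟩
  have huIcc : uIcc (0:ℝ) T = Set.Icc (0:ℝ) T := uIcc_of_le hT.le
  -- q > 1
  have hq1 : 1 < q := by
    have hp0 : 0 < p := by linarith
    have h1p1 : 1 / p < 1 := by rw [div_lt_one hp0]; exact hp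
    have h1p0 : 0 < 1 / p := by positivity
    have hq0 : 0 < 1 / q := by linarith
    have hqpos : 0 < q := one_div_pos.mp hq0
    have : 1 / q < 1 := by linarith
    rw [div_lt_one hqpos] at this
    exact this
  -- the set S and its bounds
  set S := {y : ℝ | ∃ u ∈ D, ∃ t ∈ Set.Icc (0:ℝ) T, y = f (u t)} with hSdef
  have hM0nn : 0 ≤ M0 := (abs_nonneg _).trans (hM0 u hu 0 h0T)
  have hKne : (Set.Icc (-M0) M0).Nonempty := ⟨0, by constructor <;> linarith⟩
  obtain ⟨xmax, _, hxmax⟩ := isCompact_Icc.exists_isMaxOn hKne hf.continuousOn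
  obtain ⟨xmin, _, hxmin⟩ := isCompact_Icc.exists_isMinOn hKne hf.continuousOn
  have hmemK : ∀ y ∈ S, f xmin ≤ y ∧ y ≤ f xmax := by
    rintro y ⟨v, hv, t, ht, rfl⟩
    have := hM0 v hv t ht
    have hmem : v t ∈ Set.Icc (-M0) M0 := by
      rcases abs_le.mp this with ⟨h1, h2⟩; exact ⟨h1, h2⟩
    exact ⟨hxmin hmem, hxmax hmem⟩
  have hSne : S.Nonempty := ⟨f (u 0), u, hu, 0, h0T, rfl⟩
  have hbddA : BddAbove S := ⟨f xmax, fun y hy => (hmemK y hy).2⟩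
  have hbddB : BddBelow S := ⟨f xmin, fun y hy => (hmemK y hy).1⟩
  set Mc := sSup S with hMc
  set mc := sInf S with hmc
  have hmcpos : 0 < mc :=
    lt_of_lt_of_le (hfpos xmin) (le_csInf hSne fun y hy => (hmemK y hy).1)
  have hfle : ∀ t ∈ Set.Icc (0:ℝ) T, f (u t) ≤ Mc := fun t ht =>
    le_csSup hbddA ⟨u, hu, t, ht, rfl⟩
  have hfge : ∀ t ∈ Set.Icc (0:ℝ) T, mc ≤ f (u t) := fun t ht =>
    csInf_le hbddB ⟨u, hu, t, ht, rfl⟩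
  have hMcpos : 0 < Mc := lt_of_lt_of_le hmcpos ((hfge 0 h0T).trans (hfle 0 h0T))
  -- continuity and integral bounds for f ∘ u
  obtain ⟨hucont, -, -⟩ := hD u hu
  have hfu_cont : ContinuousOn (fun τ => f (u τ)) (Set.Icc (0:ℝ) T) :=
    hf.comp_continuousOn hucont
  have hfu_int : IntervalIntegrable (fun τ => f (u τ)) volume 0 T := by
    apply ContinuousOn.intervalIntegrable; rwa [huIcc]
  set F := ∫ τ in (0:ℝ)..T, f (u τ) with hFdef
  have hTm : 0 < T * mc := mul_pos hT hmcpos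
  have hF : T * mc ≤ F := by
    have : ∫ _ in (0:ℝ)..T, mc = T * mc := by
      rw [intervalIntegral.integral_const]; simp [smul_eq_mul]
    rw [← this]
    exact intervalIntegral.integral_mono_on hT.le intervalIntegrable_const hfu_int
      fun x hx => hfge x hx
  have hFpos : 0 < F := lt_of_lt_of_le hTm hF
  have hFk : (T * mc) ^ k ≤ F ^ k := Real.rpow_le_rpow hTm.le hF hk.le
  have hTmk : 0 < (T * mc) ^ k := Real.rpow_pos_of_pos hTm k
  set Mh := Mc / (T * mc) ^ k with hMhdef
  have hMhpos : 0 < Mh := div_pos hMcpos hTmk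
  -- bounds on hfun
  have h_nonneg : ∀ r, 0 ≤ hfun T k f u r := fun r =>
    div_nonneg (hfpos _).le (Real.rpow_nonneg hFpos.le k)
  have h_le : ∀ r ∈ Set.Icc (0:ℝ) T, hfun T k f u r ≤ Mh := fun r hr =>
    div_le_div₀ hMcpos.le (hfle r hr) hTmk hFk
  have h_cont : ContinuousOn (hfun T k f u) (Set.Icc (0:ℝ) T) := by
    apply hfu_cont.div_const
  have h_int : ∀ s ∈ Set.Icc (0:ℝ) T, IntervalIntegrable (hfun T k f u) volume 0 s := by
    intro s hs
    apply ContinuousOn.intervalIntegrable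
    apply h_cont.mono
    rw [uIcc_of_le hs.1]
    exact Set.Icc_subset_Icc le_rfl hs.2
  -- bounds for integrals of hfun
  have hint_nonneg : ∀ s ∈ Set.Icc (0:ℝ) T, 0 ≤ ∫ r in (0:ℝ)..s, hfun T k f u r :=
    fun s hs => intervalIntegral.integral_nonneg hs.1 fun r _ => h_nonneg r
  have hint_le : ∀ s ∈ Set.Icc (0:ℝ) T, (∫ r in (0:ℝ)..s, hfun T k f u r) ≤ Mh * s := by
    intro s hs
    have : ∫ _ in (0:ℝ)..s, Mh = Mh * s := by
      rw [intervalIntegral.integral_const]; simp [smul_eq_mul]; ring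
    rw [← this]
    exact intervalIntegral.integral_mono_on hs.1 (h_int s hs) intervalIntegrable_const
      fun r hr => h_le r ⟨hr.1, hr.2.trans hs.2⟩
  -- A ≤ 0
  have hcoef : 0 ≤ lam * β / (1 - β) := div_nonneg (mul_nonneg hlam.le hβ0.le) h1β.le
  have hA : Afun T η β lam k f u ≤ 0 := by
    have := mul_nonneg hcoef (hint_nonneg η hηIcc)
    rw [Afun]; linarith
  set c0 := β * η / (1 - β) with hc0def
  have hc0 : 0 ≤ c0 := div_nonneg (mul_nonneg hβ0.le hη.le) h1β.le
  -- g bounds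
  have hg0 : ∀ s ∈ Set.Icc (0:ℝ) T, 0 ≤ gfun T η β lam k f u s := by
    intro s hs
    have h1 := mul_nonneg hlam.le (hint_nonneg s hs)
    rw [gfun]; linarith
  have hgle : ∀ s ∈ Set.Icc (0:ℝ) T,
      gfun T η β lam k f u s ≤ lam * Mh * (s + c0) := by
    intro s hs
    have e1 : lam * (∫ r in (0:ℝ)..s, hfun T k f u r) ≤ lam * (Mh * s) :=
      mul_le_mul_of_nonneg_left (hint_le s hs) hlam.le
    have e2 : (lam * β / (1 - β)) * (∫ r in (0:ℝ)..η, hfun T k f u r)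
        ≤ (lam * β / (1 - β)) * (Mh * η) :=
      mul_le_mul_of_nonneg_left (hint_le η hηIcc) hcoef
    have e3 : lam * (Mh * s) + (lam * β / (1 - β)) * (Mh * η)
        = lam * Mh * (s + c0) := by
      rw [hc0def]; field_simp
    rw [gfun, Afun]; linarith
  -- continuity of g and φ_q ∘ g
  have hcrpow : Continuous (fun x : ℝ => x ^ (q - 1)) := by
    rw [continuous_iff_continuousAt]
    intro x
    exact Real.continuousAt_rpow_const x (q - 1) (Or.inr (by linarith))
  have hprim : ContinuousOn (fun s => ∫ r in (0:ℝ)..s, hfun T k f u r)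
      (Set.Icc (0:ℝ) T) := by
    have h1 : IntegrableOn (hfun T k f u) (uIcc (0:ℝ) T) volume := by
      rw [huIcc]; exact h_cont.integrableOn_Icc
    have := intervalIntegral.continuousOn_primitive_interval h1
    rwa [huIcc] at this
  have hg_cont : ContinuousOn (gfun T η β lam k f u) (Set.Icc (0:ℝ) T) := by
    have : ContinuousOn (fun s => lam * (∫ r in (0:ℝ)..s, hfun T k f u r)
        - Afun T η β lam k f u) (Set.Icc (0:ℝ) T) :=
      (continuousOn_const.mul hprim).sub continuousOn_const
    exact this
  have hφg_cont : ContinuousOn (fun s => phi q (gfun T η β lam k f u s))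
      (Set.Icc (0:ℝ) T) :=
    (hcrpow.comp_continuousOn hg_cont).congr fun s hs => phi_eq_rpow hq1 (hg0 s hs)
  have hφg_int : ∀ a b, a ∈ Set.Icc (0:ℝ) T → b ∈ Set.Icc (0:ℝ) T →
      IntervalIntegrable (fun s => phi q (gfun T η β lam k f u s)) volume a b := by
    intro a b ha hb
    apply ContinuousOn.intervalIntegrable
    apply hφg_cont.mono
    exact Set.uIcc_subset_Icc ha hb
  have hφg0 : ∀ s ∈ Set.Icc (0:ℝ) T, 0 ≤ phi q (gfun T η β lam k f u s) :=
    fun s hs => phi_nonneg' (hg0 s hs)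
  set C := phi q (lam * Mc / (T * mc) ^ k) with hCdef
  have hlamMh : lam * Mc / (T * mc) ^ k = lam * Mh := by rw [hMhdef]; ring
  have hC0 : 0 ≤ C := by
    rw [hCdef, hlamMh]; exact phi_nonneg' (mul_pos hlam hMhpos).le
  have hφgle : ∀ s ∈ Set.Icc (0:ℝ) T,
      phi q (gfun T η β lam k f u s) ≤ C * phi q (s + c0) := by
    intro s hs
    calc phi q (gfun T η β lam k f u s) ≤ phi q (lam * Mh * (s + c0)) :=
          phi_mono' hq1 (hg0 s hs) (hgle s hs)
      _ = C * phi q (s + c0) := by rw [phi_mul', hCdef, hlamMh]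
  -- the comparison integrand
  have hsc_cont : ContinuousOn (fun s => phi q (s + c0)) (Set.Icc (0:ℝ) T) := by
    refine ContinuousOn.congr (f := fun s => (s + c0) ^ (q - 1)) ?_ ?_
    · exact (hcrpow.comp (continuous_id.add continuous_const)).continuousOn
    · intro s hs
      show phi q (s + c0) = (s + c0) ^ (q - 1)
      exact phi_eq_rpow hq1 (by linarith [hs.1])
  have hsc_int : IntervalIntegrable (fun s => phi q (s + c0)) volume 0 T := by
    apply ContinuousOn.intervalIntegrable; rwa [huIcc]
  set I := ∫ s in (0:ℝ)..T, phi q (s + c0) with hIdef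
  have hI0 : 0 ≤ I := intervalIntegral.integral_nonneg hT.le
    fun s hs => phi_nonneg' (by linarith [hs.1])
  set PT := ∫ s in (0:ℝ)..T, phi q (gfun T η β lam k f u s) with hPTdef
  have hPT_le : PT ≤ C * I := by
    calc PT ≤ ∫ s in (0:ℝ)..T, C * phi q (s + c0) :=
          intervalIntegral.integral_mono_on hT.le (hφg_int 0 T h0T (right_mem_Icc.mpr hT.le))
            (hsc_int.const_mul C) hφgle
      _ = C * I := by rw [hIdef, ← intervalIntegral.integral_const_mul]
  set Qφ := ∫ s in (0:ℝ)..η, phi q (gfun T η β lam k f u s) with hQφdef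
  have hQφ0 : 0 ≤ Qφ := intervalIntegral.integral_nonneg hη.le
    fun s hs => hφg0 s ⟨hs.1, hs.2.trans hηT.le⟩
  have hTmem : T ∈ Set.Icc (0:ℝ) T := right_mem_Icc.mpr hT.le
  have hsplitη : Qφ + (∫ s in η..T, phi q (gfun T η β lam k f u s)) = PT :=
    intervalIntegral.integral_add_adjacent_intervals (hφg_int 0 η h0T hηIcc)
      (hφg_int η T hηIcc hTmem)
  have hQφ_le_PT : Qφ ≤ PT := by
    have h2 : 0 ≤ ∫ s in η..T, phi q (gfun T η β lam k f u s) :=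
      intervalIntegral.integral_nonneg hηT.le fun s hs => hφg0 s ⟨hη.le.trans hs.1, hs.2⟩
    linarith
  set B := Bfun T η β lam k q f u with hBdef
  have hBeq : B = (1 / (1 - β)) * (PT - β * Qφ) := rfl
  have hinv : 0 < 1 / (1 - β) := by positivity
  have hB_le : B ≤ (1 / (1 - β)) * PT := by
    rw [hBeq]
    have := mul_nonneg hβ0.le hQφ0
    exact mul_le_mul_of_nonneg_left (by linarith) hinv.le
  have hB_ge : PT ≤ B := by
    rw [hBeq]
    have h1 : β * Qφ ≤ β * PT := mul_le_mul_of_nonneg_left hQφ_le_PT hβ0.le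
    have h2 : PT = (1 / (1 - β)) * ((1 - β) * PT) := by field_simp
    rw [h2]
    exact mul_le_mul_of_nonneg_left (by linarith) hinv.le
  -- RHS nonneg & final bound per point
  have hCI : 0 ≤ C * I := mul_nonneg hC0 hI0
  have hRHS : (1 / (1 - β)) * (C * I) ≤ 2 / (1 - β) * C * I := by
    rw [mul_assoc]
    exact mul_le_mul_of_nonneg_right ((div_le_div_iff_of_pos_right h1β).mpr one_le_two) hCI
  -- pointwise bounds on Gop
  have hGop : ∀ t ∈ Set.Icc (0:ℝ) T,
      0 ≤ Gop T η β lam k q f u t ∧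
      Gop T η β lam k q f u t ≤ 2 / (1 - β) * C * I := by
    intro t ht
    set Pt := ∫ s in (0:ℝ)..t, phi q (gfun T η β lam k f u s) with hPtdef
    have hPt0 : 0 ≤ Pt := intervalIntegral.integral_nonneg ht.1
      fun s hs => hφg0 s ⟨hs.1, hs.2.trans ht.2⟩
    have hsplit : Pt + (∫ s in t..T, phi q (gfun T η β lam k f u s)) = PT :=
      intervalIntegral.integral_add_adjacent_intervals (hφg_int 0 t h0T ht)
        (hφg_int t T ht hTmem)
    have hPt_le : Pt ≤ PT := by
      have h2 : 0 ≤ ∫ s in t..T, phi q (gfun T η β lam k f u s) :=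
        intervalIntegral.integral_nonneg ht.2 fun s hs => hφg0 s ⟨ht.1.trans hs.1, hs.2⟩
      linarith
    have hGeq : Gop T η β lam k q f u t = -Pt + B := rfl
    constructor
    · rw [hGeq]; linarith
    · rw [hGeq]
      have h3 : (1 / (1 - β)) * PT ≤ (1 / (1 - β)) * (C * I) :=
        mul_le_mul_of_nonneg_left hPT_le hinv.le
      linarith
  -- conclude
  rw [supNorm]
  apply Real.iSup_le
  · rintro ⟨t, ht⟩
    obtain ⟨hl, hr⟩ := hGop t ht
    rw [abs_of_nonneg hl]
    exact hr
  · calc (0:ℝ) ≤ (1 / (1 - β)) * (C * I) := mul_nonneg hinv.le hCI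
      _ ≤ 2 / (1 - β) * C * I := hRHS
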